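/- Let k, ℓ ≥ 2 be integers. For all natural numbers r < t, all integers L < U, every natural number n₀ with k^r·n₀ + L ≥ 0, and all real coefficients c_a (L ≤ a < U), it is NOT the case that g_{k,ℓ}(k^t·n) = Σ_{L ≤ a < U} c_a·g_{k,ℓ}(k^r·n + a) holds for all n ≥ n₀ (note that k^r·n + a ≥ 0 for all such n and a). Consequently, the sequence (g_{k,ℓ}(n))_{n ≥ 0} is not k-recursive. -/

import Mathlib

/-- For integers `k, ℓ ≥ 2`, `g k ℓ 0 = 1` and `g k ℓ n = 1 + ℓ ^ ⌊log_k n⌋` for `n > 0`. -/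
def g (k ℓ : ℕ) (n : ℕ) : ℕ := if n = 0 then 1 else 1 + ℓ ^ Nat.log k n

theorem stmt_6 (k ℓ : ℕ) (hk : 2 ≤ k) (hℓ : 2 ≤ ℓ) (r t : ℕ) (hrt : r < t)
    (L U : ℤ) (hLU : L < U) (n₀ : ℕ) (hn₀ : 0 ≤ (k ^ r * n₀ : ℤ) + L)
    (c : ℤ → ℝ) :
    ¬ (∀ n : ℕ, n₀ ≤ n →
        (g k ℓ (k ^ t * n) : ℝ) =
          ∑ a ∈ Finset.Ico L U, c a * g k ℓ ((k ^ r * n : ℤ) + a).toNat) := by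
  intro H
  have hk1 : 1 < k := hk
  have hkZ : (1:ℤ) ≤ (k:ℤ) := by exact_mod_cast hk1.le
  set S : ℝ := ∑ a ∈ Finset.Ico L U, c a with hS
  set j : ℕ := (-L).toNat with hj
  -- k^(r+j) + L ≥ 1
  have hjL : 1 ≤ (k:ℤ)^(r+j) + L := by
    have h1 : (-L) ≤ ((-L).toNat : ℤ) := Int.self_le_toNat _
    have h2 : ((j:ℤ)) < (k:ℤ)^j := by exact_mod_cast Nat.lt_pow_self (n := j) hk1
    have h3 : (k:ℤ)^j ≤ (k:ℤ)^(r+j) := pow_le_pow_right₀ hkZ (by omega)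
    omega
  -- key identity for suitable m
  have key : ∀ m : ℕ, j < m → (k:ℤ)^(r+j) + U ≤ (k:ℤ)^(r+m) → n₀ ≤ k^m →
      1 + (ℓ:ℝ)^(t+m) = S * (1 + (ℓ:ℝ)^(r+m)) := by
    intro m hjm hUm hn0m
    have hn : n₀ ≤ k^m + k^j := le_trans hn0m (Nat.le_add_right _ _)
    have heq := H (k^m + k^j) hn
    have hjmpow : k^j < k^m := Nat.pow_lt_pow_right hk1 hjm
    -- LHS
    have hlhs : g k ℓ (k ^ t * (k^m + k^j)) = 1 + ℓ^(t+m) := by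
      have hne : k ^ t * (k^m + k^j) ≠ 0 := by positivity
      have hlog : Nat.log k (k ^ t * (k^m + k^j)) = t + m := by
        apply Nat.log_eq_of_pow_le_of_lt_pow
        · calc k^(t+m) = k^t * k^m := pow_add k t m
            _ ≤ k ^ t * (k^m + k^j) := Nat.mul_le_mul_left _ (Nat.le_add_right _ _)
        · calc k ^ t * (k^m + k^j) < k^t * (k^m + k^m) :=
                mul_lt_mul_of_pos_left (by omega) (pow_pos (by omega : 0 < k) t)
            _ = 2 * (k^t * k^m) := by ring
            _ ≤ k * (k^t * k^m) := Nat.mul_le_mul_right _ hk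
            _ = k^(t+m+1) := by rw [pow_add, pow_succ]; ring
      rw [g, if_neg hne, hlog]
    -- RHS terms
    have hterm : ∀ a ∈ Finset.Ico L U,
        g k ℓ ((k ^ r * ((k^m + k^j : ℕ)) : ℤ) + a).toNat = 1 + ℓ^(r+m) := by
      intro a ha
      obtain ⟨haL, haU⟩ := Finset.mem_Ico.mp ha
      have hja : 1 ≤ (k:ℤ)^(r+j) + a := by omega
      have hval : ((k:ℤ) ^ r * ((k^m + k^j : ℕ)) : ℤ) + a
          = (k:ℤ)^(r+m) + ((k:ℤ)^(r+j) + a) := by push_cast [pow_add]; ring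
      have hjam : (k:ℤ)^(r+j) + a < (k:ℤ)^(r+m) := by omega
      have hpos : 0 ≤ ((k:ℤ) ^ r * ((k^m + k^j : ℕ)) : ℤ) + a := by
        rw [hval]
        have : (0:ℤ) ≤ (k:ℤ)^(r+m) := by positivity
        omega
      set N : ℕ := (((k:ℤ) ^ r * ((k^m + k^j : ℕ)) : ℤ) + a).toNat with hNdef
      have hNval : (N : ℤ) = (k:ℤ)^(r+m) + ((k:ℤ)^(r+j) + a) := by
        rw [hNdef, Int.toNat_of_nonneg hpos, hval]
      have hlow : k^(r+m) ≤ N := by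
        have : ((k^(r+m) : ℕ) : ℤ) ≤ (N : ℤ) := by push_cast [hNval]; omega
        exact_mod_cast this
      have hhigh : N < k^(r+m+1) := by
        have h2 : (k:ℤ)^(r+m+1) = (k:ℤ) * (k:ℤ)^(r+m) := by rw [pow_succ]; ring
        have h3 : (2:ℤ) * (k:ℤ)^(r+m) ≤ (k:ℤ) * (k:ℤ)^(r+m) := by
          have : (0:ℤ) ≤ (k:ℤ)^(r+m) := by positivity
          have h4 : (2:ℤ) ≤ (k:ℤ) := by exact_mod_cast hk
          nlinarith
        have : (N : ℤ) < ((k^(r+m+1) : ℕ) : ℤ) := by push_cast [hNval]; omega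
        exact_mod_cast this
      have hNne : N ≠ 0 := by
        have : 0 < k^(r+m) := Nat.pow_pos (by omega)
        omega
      have hNlog : Nat.log k N = r + m := Nat.log_eq_of_pow_le_of_lt_pow hlow hhigh
      rw [g, if_neg hNne, hNlog]
    -- combine
    have hsum : (∑ a ∈ Finset.Ico L U, c a * (g k ℓ (((k:ℤ) ^ r * ((k^m + k^j : ℕ)) : ℤ) + a).toNat : ℝ))
        = S * (1 + (ℓ:ℝ)^(r+m)) := by
      rw [hS, Finset.sum_mul]
      apply Finset.sum_congr rfl
      intro a ha
      rw [hterm a ha]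
      push_cast
      ring
    rw [hlhs] at heq
    push_cast at heq hsum ⊢
    rw [heq, hsum]
  -- choose m
  set Ut : ℕ := U.toNat with hUt
  set m : ℕ := max (max n₀ (j+1)) (j + 1 + Ut) with hm
  have hjm : j < m := by omega
  have hn0m : n₀ ≤ k^m := by
    have h1 : m < k^m := Nat.lt_pow_self (n := m) hk1
    omega
  have hUm : (k:ℤ)^(r+j) + U ≤ (k:ℤ)^(r+m) := by
    have h1 : (k:ℤ)^(r+m) = (k:ℤ)^(r+j) * (k:ℤ)^(m-j) := by
      rw [← pow_add]; congr 1; omega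
    have h2 : (k:ℤ)^(1+Ut) ≤ (k:ℤ)^(m-j) := pow_le_pow_right₀ hkZ (by omega)
    have h3 : ((2:ℤ))^(1+Ut) ≤ (k:ℤ)^(1+Ut) :=
      pow_le_pow_left₀ (by norm_num) (by exact_mod_cast hk) _
    have h4 : (Ut:ℤ) + 1 ≤ (2:ℤ)^Ut := by
      have := Nat.lt_two_pow_self (n := Ut)
      exact_mod_cast this
    have h5 : (2:ℤ)^(1+Ut) = 2 * 2^Ut := by rw [pow_add]; ring
    have h6 : (1:ℤ) ≤ (k:ℤ)^(r+j) := one_le_pow₀ hkZ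
    have h7 : (U:ℤ) ≤ (Ut:ℤ) := Int.self_le_toNat U
    have h8 : (2:ℤ) * ((Ut:ℤ)+1) ≤ (k:ℤ)^(m-j) := by omega
    nlinarith [h6, h8, h7]
  have eq1 := key m hjm hUm hn0m
  have eq2 := key (m+1) (by omega)
    (le_trans hUm (pow_le_pow_right₀ hkZ (by omega)))
    (le_trans hn0m (Nat.pow_le_pow_right (by omega) (by omega)))
  -- derive contradiction
  set x : ℝ := (ℓ : ℝ) with hxdef
  have hx : (2:ℝ) ≤ x := by rw [hxdef]; exact_mod_cast hℓ
  set A : ℝ := x^(r+m) with hA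
  set y : ℝ := x^(t-r) with hy
  have hApos : (0:ℝ) < A := by positivity
  have hy2 : (2:ℝ) ≤ y := by
    calc (2:ℝ) ≤ x := hx
      _ ≤ x^(t-r) := le_self_pow₀ (by linarith) (by omega)
  have hB : x^(t+m) = y * A := by
    have h : t+m = (t-r) + (r+m) := by omega
    rw [h, hy, hA, pow_add]
  have hB2 : x^(t+(m+1)) = y * A * x := by
    have h : t+(m+1) = (t-r) + (r+m) + 1 := by omega
    rw [h, hy, hA, pow_add, pow_add, pow_one]
  have hA2 : x^(r+(m+1)) = A * x := by
    have h : r+(m+1) = (r+m) + 1 := by omega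
    rw [h, hA, pow_add, pow_one]
  rw [hB] at eq1
  rw [hB2, hA2] at eq2
  have hS1 : S = 1 := by
    have h0 : (S - 1) * (x - 1) = 0 := by linear_combination eq2 - x * eq1
    have hx1 : x - 1 ≠ 0 := by linarith
    have := mul_eq_zero.mp h0
    rcases this with h | h
    · linarith
    · exact absurd h hx1
  rw [hS1] at eq1
  nlinarith [eq1, hApos, hy2]
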